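/- For every integer m ≥ 0 and every real t with |t| < √3, ∑_{n≥0} c_{m,n} · t^n = (1 − t + t²/3)^{−(m+1)}, where c_{m,n} = (1/2^n) · C(n+2m+1, n) · ∑_{j=0}^{⌊n/2⌋} (−n/2)_j · ((1−n)/2)_j / ((m+3/2)_j · j!) · (−1/3)^j. In other words, the terminating hypergeometric expression (1/2^n)·C(n+2m+1,n)·₂F₁(−n/2, −(n−1)/2; m+3/2 | −1/3) equals the coefficient of t^n in (1 − t + t²/3)^{−(m+1)}. -/

import Mathlib

open Polynomial Finset Complex
open scoped ENNReal NNReal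

lemma K1 (m : ℕ) : ∀ j : ℕ, (ascPochhammer ℝ j).eval ((m : ℝ) + 3/2) * 4^j *
    (Nat.factorial (m+j)) * (Nat.factorial (2*m+1)) =
    (Nat.factorial (2*m+2*j+1)) * (Nat.factorial m) := by
  intro j
  induction j with
  | zero => simp [mul_comm]
  | succ j ih =>
    rw [ascPochhammer_succ_eval]
    have h1 : (m + (j+1)) = (m+j) + 1 := by omega
    have h2 : (2*m+2*(j+1)+1) = ((2*m+2*j+1) + 1) + 1 := by omega
    rw [h1, h2, Nat.factorial_succ (m+j), Nat.factorial_succ ((2*m+2*j+1)+1),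
      Nat.factorial_succ (2*m+2*j+1)]
    push_cast
    linear_combination (4*((m:ℝ)+3/2+j)*(m+j+1)) * ih

lemma K2 (n : ℕ) : ∀ j : ℕ, 2*j ≤ n → (ascPochhammer ℝ j).eval (-(n:ℝ)/2) *
    (ascPochhammer ℝ j).eval ((1-(n:ℝ))/2) * 4^j * (Nat.factorial (n - 2*j)) =
    Nat.factorial n := by
  intro j
  induction j with
  | zero => simp
  | succ j ih =>
    intro h
    have ihh := ih (by omega)
    rw [ascPochhammer_succ_eval, ascPochhammer_succ_eval]
    have h1 : n - 2*j = ((n - 2*(j+1)) + 1) + 1 := by omega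
    rw [h1, Nat.factorial_succ ((n-2*(j+1))+1), Nat.factorial_succ (n-2*(j+1))] at ihh
    have hc : (n : ℝ) = ((n - 2*(j+1) : ℕ) : ℝ) + 2*j + 2 := by
      have : n = (n - 2*(j+1)) + 2*j + 2 := by omega
      exact_mod_cast congrArg (Nat.cast : ℕ → ℝ) this
    push_cast at ihh ⊢
    rw [hc] at ihh ⊢
    linear_combination ihh


/-- The coefficient `c_{m,n} = (1/2^n)·C(n+2m+1,n)·₂F₁(−n/2, −(n−1)/2; m+3/2 | −1/3)`
(a terminating hypergeometric sum). -/
noncomputable def airyCoeffC (m n : ℕ) : ℝ :=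
  (1 / 2 ^ n) * (Nat.choose (n + 2 * m + 1) n : ℝ) *
    ∑ j ∈ Finset.range (n / 2 + 1),
      (ascPochhammer ℝ j).eval (-(n : ℝ) / 2) *
        (ascPochhammer ℝ j).eval ((1 - (n : ℝ)) / 2) /
        ((ascPochhammer ℝ j).eval ((m : ℝ) + 3 / 2) * (Nat.factorial j : ℝ)) *
        (-1 / 3 : ℝ) ^ j

noncomputable def airyE (m n : ℕ) : ℝ :=
  (1 / 2 ^ n) * ∑ j ∈ Finset.range (n / 2 + 1),
    ((j + m).choose m : ℝ) * ((n + 2*m + 1).choose (n - 2*j) : ℝ) * (-1/3 : ℝ) ^ j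

lemma airyCoeffC_eq_airyE (m n : ℕ) : airyCoeffC m n = airyE m n := by
  unfold airyCoeffC airyE
  rw [mul_assoc, mul_sum]
  congr 1
  refine Finset.sum_congr rfl fun j hj => ?_
  have h2j : 2*j ≤ n := by
    have := Finset.mem_range.mp hj
    omega
  have hP3 : 0 < (ascPochhammer ℝ j).eval ((m : ℝ) + 3/2) :=
    ascPochhammer_pos _ _ (by positivity)
  -- choose identities
  have hfj : (0:ℝ) < Nat.factorial j := by positivity
  have hfn : (0:ℝ) < Nat.factorial n := by positivity
  have h4 : (0:ℝ) < (4:ℝ)^j := by positivity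
  have hfn2j : (0:ℝ) < Nat.factorial (n - 2*j) := by positivity
  have hfmj : (0:ℝ) < Nat.factorial (m+j) := by positivity
  have hfm : (0:ℝ) < Nat.factorial m := by positivity
  have hf2m1 : (0:ℝ) < Nat.factorial (2*m+1) := by positivity
  have hf2mj1 : (0:ℝ) < Nat.factorial (2*m+2*j+1) := by positivity
  have eC : ((n + 2*m+1).choose n : ℝ) = Nat.factorial (n+2*m+1) /
      (Nat.factorial n * Nat.factorial (2*m+1)) := by
    rw [eq_div_iff (by positivity)]
    have := congrArg (Nat.cast : ℕ → ℝ) (Nat.add_choose_mul_factorial_mul_factorial (2*m+1) n)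
    rw [show 2*m+1+n = n+2*m+1 by omega] at this
    push_cast at this
    linear_combination this
  have eC2 : ((n + 2*m+1).choose (n - 2*j) : ℝ) = Nat.factorial (n+2*m+1) /
      (Nat.factorial (n - 2*j) * Nat.factorial (2*m+2*j+1)) := by
    rw [eq_div_iff (by positivity)]
    have := congrArg (Nat.cast : ℕ → ℝ)
      (Nat.add_choose_mul_factorial_mul_factorial (2*m+2*j+1) (n - 2*j))
    rw [show 2*m+2*j+1 + (n - 2*j) = n+2*m+1 by omega] at this
    push_cast at this
    linear_combination this
  have eC3 : ((j + m).choose m : ℝ) = Nat.factorial (m+j) /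
      (Nat.factorial m * Nat.factorial j) := by
    rw [eq_div_iff (by positivity), show m+j = j+m from by omega]
    have := congrArg (Nat.cast : ℕ → ℝ) (Nat.add_choose_mul_factorial_mul_factorial j m)
    push_cast at this
    linear_combination this
  have eP12 : (ascPochhammer ℝ j).eval (-(n:ℝ)/2) * (ascPochhammer ℝ j).eval ((1-(n:ℝ))/2)
      = Nat.factorial n / (4^j * Nat.factorial (n - 2*j)) := by
    rw [eq_div_iff (by positivity)]
    linear_combination K2 n j h2j
  have eP3 : (ascPochhammer ℝ j).eval ((m:ℝ) + 3/2)
      = (Nat.factorial (2*m+2*j+1) * Nat.factorial m) /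
        (4^j * Nat.factorial (m+j) * Nat.factorial (2*m+1)) := by
    rw [eq_div_iff (by positivity)]
    linear_combination K1 m j
  rw [eC, eC2, eC3, eP3]
  rw [show (ascPochhammer ℝ j).eval (-(n:ℝ)/2) * (ascPochhammer ℝ j).eval ((1-(n:ℝ))/2)
      = Nat.factorial n / (4^j * Nat.factorial (n - 2*j)) from eP12]
  field_simp


noncomputable def alam : ℂ := (3 + (Real.sqrt 3 : ℝ) * Complex.I) / 6
noncomputable def amu : ℂ := (3 - (Real.sqrt 3 : ℝ) * Complex.I) / 6

lemma h3c : ((Real.sqrt 3 : ℝ) : ℂ)^2 = 3 := by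
  rw [← Complex.ofReal_pow, Real.sq_sqrt (by norm_num : (0:ℝ) ≤ 3)]
  norm_num

lemma alam_mul_amu : alam * amu = 1/3 := by
  unfold alam amu
  have hI : Complex.I^2 = -1 := Complex.I_sq
  linear_combination (-Complex.I^2/36) * h3c + (-(3:ℂ)/36) * hI

lemma alam_add_amu : alam + amu = 1 := by unfold alam amu; ring

lemma factor_eq (t : ℂ) : (1 - alam * t) * (1 - amu * t) = 1 - t + t^2/3 := by
  linear_combination (t^2) * alam_mul_amu - t * alam_add_amu

lemma norm_alam : ‖alam‖ = Real.sqrt 3 / 3 := by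
  unfold alam
  rw [norm_div]
  have h1 : ((3:ℂ) + (Real.sqrt 3 : ℝ) * Complex.I) = ((3:ℝ):ℂ) + (Real.sqrt 3 : ℝ) * Complex.I := by
    norm_num
  rw [h1, Complex.norm_def, Complex.normSq_add_mul_I]
  rw [Real.sq_sqrt (by norm_num : (0:ℝ) ≤ 3)]
  have : (3:ℝ)^2 + 3 = 12 := by norm_num
  rw [this, show (12:ℝ) = 4 * 3 by norm_num, Real.sqrt_mul (by norm_num)]
  rw [show Real.sqrt 4 = 2 by
    rw [show (4:ℝ) = 2^2 by norm_num, Real.sqrt_sq (by norm_num : (0:ℝ) ≤ 2)]]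
  have h6 : ‖(6:ℂ)‖ = 6 := by norm_num
  rw [h6]
  ring

lemma norm_amu : ‖amu‖ = Real.sqrt 3 / 3 := by
  have : amu = (starRingEnd ℂ) alam := by
    unfold alam amu
    rw [map_div₀, map_add, map_mul, Complex.conj_I, Complex.conj_ofReal,
      map_ofNat, map_ofNat]
    ring
  rw [this, RCLike.norm_conj, norm_alam]

noncomputable def airyP (m n : ℕ) : ℂ :=
  ∑ k ∈ Finset.range (n+1), ((k+m).choose m : ℂ) * (((n-k)+m).choose m : ℂ)
    * alam^k * amu^(n-k)

lemma norm_mul_lt {a t : ℂ} (ha : ‖a‖ = Real.sqrt 3 / 3) (ht : ‖t‖ < Real.sqrt 3) :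
    ‖a * t‖ < 1 := by
  rw [norm_mul, ha]
  calc Real.sqrt 3 / 3 * ‖t‖ < Real.sqrt 3 / 3 * Real.sqrt 3 :=
        mul_lt_mul_of_pos_left ht (by positivity)
    _ = 1 := by
        rw [div_mul_eq_mul_div, Real.mul_self_sqrt (by norm_num : (0:ℝ) ≤ 3)]
        norm_num

lemma hasSum_binom (m : ℕ) {r : ℂ} (hr : ‖r‖ < 1) :
    HasSum (fun k => ((k+m).choose m : ℂ) * r^k) (((1 - r)^(m+1))⁻¹) := by
  have := hasSum_choose_mul_geometric_of_norm_lt_one (𝕜 := ℂ) m hr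
  simpa [one_div] using this

lemma summable_norm_binom (m : ℕ) {r : ℂ} (hr : ‖r‖ < 1) :
    Summable (fun k => ‖((k+m).choose m : ℂ) * r^k‖) := by
  have h := (hasSum_choose_mul_geometric_of_norm_lt_one (𝕜 := ℝ) m
    (r := ‖r‖) (by simpa using hr)).summable
  refine h.congr fun k => ?_
  rw [norm_mul, norm_pow, Complex.norm_natCast]

lemma airyP_hasSum (m : ℕ) {t : ℂ} (ht : ‖t‖ < Real.sqrt 3) :
    HasSum (fun n => airyP m n * t^n) (((1 - t + t^2/3)^(m+1))⁻¹) := by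
  have hlt : ‖alam * t‖ < 1 := norm_mul_lt norm_alam ht
  have hmt : ‖amu * t‖ < 1 := norm_mul_lt norm_amu ht
  set f : ℕ → ℂ := fun k => ((k+m).choose m : ℂ) * (alam*t)^k with hfdef
  set g : ℕ → ℂ := fun k => ((k+m).choose m : ℂ) * (amu*t)^k with hgdef
  have hf : HasSum f (((1 - alam*t)^(m+1))⁻¹) := hasSum_binom m hlt
  have hg : HasSum g (((1 - amu*t)^(m+1))⁻¹) := hasSum_binom m hmt
  have hfn : Summable (fun k => ‖f k‖) := summable_norm_binom m hlt
  have hgn : Summable (fun k => ‖g k‖) := summable_norm_binom m hmt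
  have hsum : Summable fun n => ∑ k ∈ Finset.range (n+1), f k * g (n-k) :=
    summable_sum_mul_range_of_summable_norm' hfn hf.summable hgn hg.summable
  have htsum : ((∑' n, f n) * ∑' n, g n) = ∑' n, ∑ k ∈ Finset.range (n+1), f k * g (n-k) :=
    tsum_mul_tsum_eq_tsum_sum_range_of_summable_norm hfn hgn
  have hterm : ∀ n, ∑ k ∈ Finset.range (n+1), f k * g (n-k) = airyP m n * t^n := by
    intro n
    rw [airyP, Finset.sum_mul]
    refine Finset.sum_congr rfl fun k hk => ?_
    have hkn : k ≤ n := by have := Finset.mem_range.mp hk; omega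
    rw [hfdef, hgdef]
    simp only
    rw [mul_pow, mul_pow]
    have : t^k * t^(n-k) = t^n := by
      rw [← pow_add, Nat.add_sub_cancel' hkn]
    linear_combination (((k + m).choose m : ℂ) * alam ^ k *
      (((n - k) + m).choose m : ℂ) * amu ^ (n - k)) * this
  have hval : ((∑' n, f n) * ∑' n, g n) = ((1 - t + t^2/3)^(m+1))⁻¹ := by
    rw [hf.tsum_eq, hg.tsum_eq, ← mul_inv, ← mul_pow, factor_eq]
  have h2 := (hsum.congr hterm).hasSum
  have hv2 : (∑' b, airyP m b * t^b) = ((1 - t + t^2/3)^(m+1))⁻¹ := by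
    rw [← tsum_congr hterm, ← htsum, hval]
  rwa [hv2] at h2


lemma hasFPS {f : ℂ → ℂ} {c : ℕ → ℂ} {r : ℝ} (hr : 0 < r)
    (hc : ∀ t : ℂ, ‖t‖ < r → HasSum (fun n => c n * t^n) (f t)) :
    HasFPowerSeriesAt f (FormalMultilinearSeries.ofScalars ℂ c) 0 := by
  refine ⟨ENNReal.ofReal (r/2), ?_, by positivity, ?_⟩
  · -- radius bound
    rw [show ENNReal.ofReal (r/2) = ((r/2).toNNReal : ℝ≥0∞) from rfl]
    apply FormalMultilinearSeries.le_radius_of_summable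
    have t0 : ‖((r/2 : ℝ) : ℂ)‖ < r := by
      rw [Complex.norm_real, Real.norm_of_nonneg (by positivity)]; linarith
    have hs := (hc _ t0).summable
    rw [← summable_norm_iff] at hs
    refine hs.congr fun n => ?_
    rw [norm_mul, norm_pow, Complex.norm_real, Real.norm_of_nonneg (by positivity),
      FormalMultilinearSeries.ofScalars_norm, Real.coe_toNNReal _ (by positivity)]
  · intro y hy
    have hy' : ‖y‖ < r/2 := by
      rw [EMetric.mem_ball, edist_zero_right, ← ofReal_norm,
        ENNReal.ofReal_lt_ofReal_iff (by positivity)] at hy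
      exact hy
    have := hc y (by linarith)
    simp only [FormalMultilinearSeries.ofScalars_apply_eq, smul_eq_mul, zero_add]
    exact this

lemma coeff_unique {f : ℂ → ℂ} {a b : ℕ → ℂ} {r : ℝ} (hr : 0 < r)
    (ha : ∀ t : ℂ, ‖t‖ < r → HasSum (fun n => a n * t^n) (f t))
    (hb : ∀ t : ℂ, ‖t‖ < r → HasSum (fun n => b n * t^n) (f t)) : a = b := by
  have h := (hasFPS hr ha).eq_formalMultilinearSeries (hasFPS hr hb)
  exact FormalMultilinearSeries.ofScalars_series_injective (𝕜 := ℂ) (E := ℂ) h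

lemma choose_le_two_pow (n k : ℕ) : n.choose k ≤ 2^n := by
  rcases le_or_gt k n with h | h
  · calc n.choose k ≤ ∑ i ∈ Finset.range (n+1), n.choose i :=
        Finset.single_le_sum (fun i _ => Nat.zero_le _) (Finset.mem_range.mpr (by omega))
      _ = 2^n := Nat.sum_range_choose n
  · rw [Nat.choose_eq_zero_of_lt h]; exact Nat.zero_le _

lemma airyE_hasSum_small (m : ℕ) {t : ℂ} (ht : ‖t‖ < 1/2) :
    HasSum (fun n => (airyE m n : ℂ) * t^n) (((1 - t + t^2/3)^(m+1))⁻¹) := by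
  have htd : ‖t/2‖ = ‖t‖/2 := by rw [norm_div]; norm_num
  have ht2 : ‖t/2‖ < 1 := by rw [htd]; linarith
  have hb : (3:ℝ)/4 ≤ ‖1 - t/2‖ := by
    have h1 : ‖(1:ℂ)‖ - ‖t/2‖ ≤ ‖1 - t/2‖ := norm_sub_norm_le 1 (t/2)
    have h2 : ‖t/2‖ ≤ 1/4 := by rw [htd]; linarith
    rw [norm_one] at h1
    linarith
  have h1t : (1 : ℂ) - t/2 ≠ 0 := by
    intro h
    rw [h] at hb
    simp at hb
    linarith
  set w : ℂ := (-1/12) * t^2 * ((1 - t/2)^2)⁻¹ with hw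
  have hwn : ‖w‖ < 1 := by
    rw [hw]
    rw [norm_mul, norm_mul, norm_inv, norm_pow, norm_pow]
    have h2 : ‖(-1/12 : ℂ)‖ = 1/12 := by norm_num
    rw [h2]
    have hnn : ‖t‖^2 ≤ 1/4 := by nlinarith [norm_nonneg t]
    have hic : (‖1 - t/2‖^2)⁻¹ ≤ (9/16 : ℝ)⁻¹ := by
      apply inv_anti₀ (by norm_num)
      nlinarith
    have pos : (0:ℝ) ≤ (‖1 - t/2‖ ^ 2)⁻¹ := by positivity
    calc 1/12 * ‖t‖^2 * (‖1 - t/2‖^2)⁻¹ ≤ 1/12 * (1/4) * (9/16:ℝ)⁻¹ := by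
          apply mul_le_mul (by nlinarith) hic pos (by norm_num)
      _ < 1 := by norm_num
  -- the double-indexed family
  set F : ℕ × ℕ → ℂ := fun p =>
    ((p.1+m).choose m : ℂ) * ((p.2 + (2*m+2*p.1+1)).choose (2*m+2*p.1+1) : ℂ)
      * (-1/12)^p.1 * (1/2)^p.2 * t^(2*p.1+p.2) with hF
  -- fiberwise sums over k
  have hfib : ∀ j : ℕ, HasSum (fun k => F (j, k))
      (((j+m).choose m : ℂ) * (-1/12)^j * t^(2*j) * (((1 - t/2)^(2*m+2*j+2))⁻¹)) := by
    intro j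
    have h0 := (hasSum_binom (2*m+2*j+1) ht2).mul_left
      (((j+m).choose m : ℂ) * (-1/12)^j * t^(2*j))
    have : 2*m+2*j+1+1 = 2*m+2*j+2 := by omega
    rw [this] at h0
    refine h0.congr_fun fun k => ?_
    show ((j+m).choose m : ℂ) * _ * (-1/12)^j * (1/2)^k * t^(2*j+k) = _
    rw [pow_add t, div_pow]
    ring
  -- sum of fiber sums
  have hS : HasSum (fun j => ((j+m).choose m : ℂ) * (-1/12)^j * t^(2*j) *
      (((1 - t/2)^(2*m+2*j+2))⁻¹)) (((1 - t + t^2/3)^(m+1))⁻¹) := by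
    have h0 := (hasSum_binom m hwn).mul_left (((1 - t/2)^(2*m+2))⁻¹)
    have hval : ((1 - t/2)^(2*m+2))⁻¹ * ((1 - w)^(m+1))⁻¹ = ((1 - t + t^2/3)^(m+1))⁻¹ := by
      rw [← mul_inv]
      congr 1
      have hkey : (1 - w) * (1 - t/2)^2 = 1 - t + t^2/3 := by
        rw [hw]
        have hc : (((1:ℂ)-t/2)^2)⁻¹ * (1-t/2)^2 = 1 :=
          inv_mul_cancel₀ (pow_ne_zero 2 h1t)
        linear_combination (t^2/12) * hc
      calc (1 - t/2)^(2*m+2) * (1-w)^(m+1) = (((1-t/2)^2)^(m+1)) * (1-w)^(m+1) := by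
            rw [← pow_mul]; ring_nf
        _ = ((1 - w) * (1 - t/2)^2)^(m+1) := by rw [← mul_pow]; ring_nf
        _ = (1 - t + t^2/3)^(m+1) := by rw [hkey]
    rw [hval] at h0
    refine h0.congr_fun fun j => ?_
    rw [hw]
    have : ((1:ℂ) - t/2)^(2*m+2*j+2) = (1 - t/2)^(2*m+2) * ((1-t/2)^2)^j := by
      rw [← pow_mul, ← pow_add]; ring_nf
    rw [this, mul_inv, mul_pow, mul_pow]
    have hinv : (((1 - t/2)^2 : ℂ)⁻¹)^j = (((1-t/2)^2)^j)⁻¹ := by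
      rw [inv_pow]
    rw [hinv]
    ring
  -- norm summability of F
  have hFs : Summable F := by
    apply Summable.of_norm
    have hu : Summable (fun j : ℕ => (2:ℝ)^(2*m+1) * (((j+m).choose m : ℝ) * (‖t‖^2/3)^j)) := by
      apply Summable.mul_left
      have hq : ‖(‖t‖^2/3 : ℝ)‖ < 1 := by
        rw [Real.norm_of_nonneg (by positivity)]
        nlinarith [norm_nonneg t]
      have := (hasSum_choose_mul_geometric_of_norm_lt_one (𝕜 := ℝ) m hq).summable
      refine this.congr fun j => ?_
      norm_num
    have hv : Summable (fun k : ℕ => ‖t‖^k) :=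
      summable_geometric_of_lt_one (norm_nonneg t) (by linarith)
    have hprod := hu.mul_of_nonneg hv (fun j => by positivity) (fun k => by positivity)
    refine Summable.of_nonneg_of_le (fun p => norm_nonneg _) (fun p => ?_) hprod
    rcases p with ⟨j, k⟩
    show ‖F (j, k)‖ ≤ _
    rw [hF]
    simp only
    rw [norm_mul, norm_mul, norm_mul, norm_mul, norm_pow, norm_pow, norm_pow,
      Complex.norm_natCast, Complex.norm_natCast]
    have hn12 : ‖(-1/12 : ℂ)‖ = 1/12 := by norm_num
    have hn2 : ‖(1/2 : ℂ)‖ = 1/2 := by norm_num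
    rw [hn12, hn2, pow_add]
    have hcb : ((k + (2*m+2*j+1)).choose (2*m+2*j+1) : ℝ) ≤ 2^(2*m+1) * 4^j * 2^k := by
      have h := choose_le_two_pow (k + (2*m+2*j+1)) (2*m+2*j+1)
      have h2 : (2:ℝ)^(k + (2*m+2*j+1)) = 2^(2*m+1) * 4^j * 2^k := by
        rw [show k + (2*m+2*j+1) = (2*m+1) + 2*j + k by omega, pow_add, pow_add, pow_mul]
        norm_num
      calc ((k + (2*m+2*j+1)).choose (2*m+2*j+1) : ℝ) ≤ (2:ℝ)^(k + (2*m+2*j+1)) := by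
            exact_mod_cast h
        _ = _ := h2
    have hle : ((j+m).choose m : ℝ) * ((k + (2*m+2*j+1)).choose (2*m+2*j+1) : ℝ) *
        (1/12)^j * (1/2)^k * (‖t‖^(2*j) * ‖t‖^k) ≤
        (2:ℝ)^(2*m+1) * (((j+m).choose m : ℝ) * (‖t‖^2/3)^j) * ‖t‖^k := by
      have e1 : (‖t‖^2/3)^j = ‖t‖^(2*j) * (1/3)^j := by
        rw [div_pow, pow_mul, one_div, inv_pow]
        ring
      rw [e1]
      have key : ((k + (2*m+2*j+1)).choose (2*m+2*j+1) : ℝ) * ((1/12)^j * (1/2)^k) ≤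
          2^(2*m+1) * ((1/3)^j * 1) := by
        calc ((k + (2*m+2*j+1)).choose (2*m+2*j+1) : ℝ) * ((1/12)^j * (1/2)^k)
            ≤ (2^(2*m+1) * 4^j * 2^k) * ((1/12)^j * (1/2)^k) := by
              apply mul_le_mul_of_nonneg_right hcb (by positivity)
          _ = 2^(2*m+1) * ((4/12)^j * (2/2)^k) := by
              rw [div_pow, div_pow, div_pow, div_pow]
              ring
          _ = 2^(2*m+1) * ((1/3)^j * 1) := by norm_num
      have hcc : (0:ℝ) ≤ ((j+m).choose m : ℝ) * (‖t‖^(2*j) * ‖t‖^k) := by positivity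
      nlinarith [key, mul_le_mul_of_nonneg_right key hcc, norm_nonneg t]
    exact hle
  -- total sum of F
  have hFtot : HasSum F (((1 - t + t^2/3)^(m+1))⁻¹) := by
    have h1 := hFs.hasSum
    have h2 := h1.prod_fiberwise hfib
    rwa [h2.unique hS] at h1
  -- regroup along n
  set G : ℕ × ℕ → ℂ := fun q => if 2*q.2 ≤ q.1 then
      ((q.2+m).choose m : ℂ) * (((q.1 - 2*q.2) + (2*m+2*q.2+1)).choose (2*m+2*q.2+1) : ℂ)
        * (-1/12)^q.2 * (1/2)^(q.1-2*q.2) * t^q.1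
    else 0 with hG
  set ι : ℕ × ℕ → ℕ × ℕ := fun p => (2*p.1 + p.2, p.1) with hι
  have hinj : Function.Injective ι := by
    intro p q h
    rw [hι] at h
    simp only [Prod.mk.injEq] at h
    obtain ⟨h1, h2⟩ := h
    exact Prod.ext (by omega) (by omega)
  have hcomp : ∀ p, G (ι p) = F p := by
    intro p
    rw [hG, hι]
    simp only
    rw [if_pos (by omega : 2*p.1 ≤ 2*p.1 + p.2)]
    have hs : 2*p.1 + p.2 - 2*p.1 = p.2 := by omega
    rw [hs, hF]
  have hG0 : ∀ q ∉ Set.range ι, G q = 0 := by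
    intro q hq
    by_cases hc : 2*q.2 ≤ q.1
    · exfalso
      apply hq
      exact ⟨(q.2, q.1 - 2*q.2), Prod.ext (by simp [hι]; omega) (by simp [hι])⟩
    · rw [hG]
      simp only
      rw [if_neg hc]
  have hGsum : HasSum G (((1 - t + t^2/3)^(m+1))⁻¹) := by
    rw [← Function.Injective.hasSum_iff hinj hG0]
    exact (show G ∘ ι = F from funext hcomp) ▸ hFtot
  -- fibers over n
  have hfib2 : ∀ n : ℕ, HasSum (fun j => G (n, j)) ((airyE m n : ℂ) * t^n) := by
    intro n
    have hfin : HasSum (fun j => G (n, j)) (∑ j ∈ Finset.range (n/2+1), G (n, j)) := by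
      apply hasSum_sum_of_ne_finset_zero
      intro j hj
      rw [hG]
      simp only
      rw [if_neg (by rw [Finset.mem_range] at hj; omega)]
    have hval : ∑ j ∈ Finset.range (n/2+1), G (n, j) = (airyE m n : ℂ) * t^n := by
      rw [airyE]
      push_cast
      rw [mul_comm ((1:ℂ)/2^n) _, mul_assoc, Finset.sum_mul]
      refine Finset.sum_congr rfl fun j hj => ?_
      have h2j : 2*j ≤ n := by rw [Finset.mem_range] at hj; omega
      rw [hG]
      simp only
      rw [if_pos h2j]
      have hch : ((n - 2*j) + (2*m+2*j+1)) = n + 2*m + 1 := by omega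
      rw [hch]
      have hsym : (n + 2*m + 1).choose (2*m+2*j+1) = (n + 2*m + 1).choose (n - 2*j) := by
        have := Nat.choose_symm (show 2*m+2*j+1 ≤ n+2*m+1 by omega)
        rw [show n+2*m+1 - (2*m+2*j+1) = n - 2*j by omega] at this
        exact this.symm
      rw [hsym]
      have hsp : (1/2 : ℂ)^(2*j) * (1/2)^(n - 2*j) = (1/2)^n := by
        rw [← pow_add, show 2*j + (n - 2*j) = n by omega]
      have hq : ((-1:ℂ)/12)^j * (1/2:ℂ)^(n-2*j) = (-1/3)^j * (1/2)^n := by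
        have e1 : ((-1:ℂ)/12)^j = (-1/3)^j * (1/2)^(2*j) := by
          rw [pow_mul, ← mul_pow]
          norm_num
        rw [e1, mul_assoc, hsp]
      have hhalf : ((1:ℂ)/2)^n = 1/2^n := by rw [div_pow, one_pow]
      calc ((j+m).choose m : ℂ) * ((n + 2*m + 1).choose (n - 2*j) : ℂ)
            * (-1/12)^j * (1/2)^(n-2*j) * t^n
          = ((j+m).choose m : ℂ) * ((n + 2*m + 1).choose (n - 2*j) : ℂ)
            * ((-1/12)^j * (1/2)^(n-2*j)) * t^n := by ring
        _ = ((j+m).choose m : ℂ) * ((n + 2*m + 1).choose (n - 2*j) : ℂ)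
            * ((-1/3)^j * (1/2)^n) * t^n := by rw [hq]
        _ = ((j+m).choose m : ℂ) * ((n + 2*m + 1).choose (n - 2*j) : ℂ) * (-1/3)^j
            * (1/2^n * t^n) := by rw [hhalf]; ring
    rw [← hval]
    exact hfin
  exact hGsum.prod_fiberwise hfib2


theorem airyCoeffC_generating_function (m : ℕ) (t : ℝ) (ht : |t| < Real.sqrt 3) :
    ∑' n : ℕ, airyCoeffC m n * t ^ n = (1 - t + t ^ 2 / 3) ^ (-(m + 1 : ℤ)) := by
  have h12 : (0:ℝ) < 1/2 := by norm_num
  have hhalf_lt : (1:ℝ)/2 < Real.sqrt 3 := by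
    have h1 : (1:ℝ) ≤ Real.sqrt 3 := by
      rw [show (1:ℝ) = Real.sqrt 1 by simp]
      exact Real.sqrt_le_sqrt (by norm_num)
    linarith
  have heq : (fun n => (airyE m n : ℂ)) = airyP m :=
    coeff_unique (f := fun s : ℂ => ((1 - s + s^2/3)^(m+1))⁻¹) h12
      (fun s hs => airyE_hasSum_small m hs)
      (fun s hs => airyP_hasSum m (lt_trans hs hhalf_lt))
  have hn : ∀ n, (airyE m n : ℂ) = airyP m n := fun n => congrFun heq n
  have htC : ‖(t : ℂ)‖ < Real.sqrt 3 := by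
    rw [Complex.norm_real, Real.norm_eq_abs]
    exact ht
  have h := airyP_hasSum m htC
  have hE : HasSum (fun n => (airyE m n : ℂ) * (t:ℂ)^n)
      (((1 - (t:ℂ) + (t:ℂ)^2/3)^(m+1))⁻¹) :=
    h.congr_fun (fun n => by rw [hn n])
  have h2 : HasSum (fun n => ((airyE m n * t^n : ℝ) : ℂ))
      ((((1 - t + t^2/3 : ℝ)^(m+1))⁻¹ : ℝ) : ℂ) := by
    convert hE using 2 <;> push_cast <;> ring
  have h4 : HasSum (fun n => airyE m n * t^n) (((1 - t + t^2/3)^(m+1))⁻¹) :=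
    Complex.hasSum_ofReal.mp h2
  calc ∑' n : ℕ, airyCoeffC m n * t ^ n
      = ∑' n : ℕ, airyE m n * t ^ n := by
        exact tsum_congr fun n => by rw [airyCoeffC_eq_airyE]
    _ = ((1 - t + t^2/3)^(m+1))⁻¹ := h4.tsum_eq
    _ = (1 - t + t ^ 2 / 3) ^ (-(m + 1 : ℤ)) := by
        rw [zpow_neg, show ((m+1:ℤ)) = ((m+1 : ℕ) : ℤ) by push_cast; ring, zpow_natCast]
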